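/- Let f:(X,x₀)→(Y,y₀) be a pointed continuous map of compact path-connected metric spaces and let n ≥ 1. Then dcat(f) < n if and only if f admits a lift with respect to the fibration B_n(p_Y): P(Y)_n → Y, i.e., there is a continuous map g : X → P(Y)_n with B_n(p_Y) ∘ g = f. -/

import Mathlib

/-!
STATEMENT 0: Let f:(X,x₀)→(Y,y₀) be a pointed continuous map of compact path-connected
metric spaces and let n ≥ 1. Then dcat(f) < n if and only if f admits a lift with respect
to the fibration B_n(p_Y): P(Y)_n → Y, i.e. there is a continuous map g : X → P(Y)_n with
B_n(p_Y) ∘ g = f.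
-/

open Metric Set MeasureTheory

noncomputable section
universe u

/-! ### Distributional category and LS-category -/

/-- Every metric space is equipped with its Borel σ-algebra. -/
local instance (priority := 50) borelMeasurable (Z : Type*) [MetricSpace Z] :
    MeasurableSpace Z := borel Z

local instance (priority := 50) borelBorelSpace (Z : Type*) [MetricSpace Z] :
    @BorelSpace Z _ (borelMeasurable Z) := ⟨rfl⟩

/-- `P(Y)`: the space of paths in `Y` ending at the basepoint `y₀` (with the uniform metric). -/
abbrev EndPaths (Y : Type*) [MetricSpace Y] (y₀ : Y) : Type _ :=
  {φ : C(unitInterval, Y) // φ 1 = y₀}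

/-- `B_n(Z)`: the space of probability measures on `Z` supported on at most `n` points,
equipped with the Lévy–Prokhorov metric. -/
abbrev FinSuppMeasures (n : ℕ) (Z : Type*) [MetricSpace Z] : Type _ :=
  {μ : MeasureTheory.LevyProkhorov (MeasureTheory.ProbabilityMeasure Z) //
    ∃ s : Finset Z, s.card ≤ n ∧ (MeasureTheory.LevyProkhorov.toMeasureEquiv μ) (↑s : Set Z) = 1}

/-- `dcat f ≤ n` for a pointed map `f : (X,x₀) → (Y,y₀)`: there is a continuous map
`H : X → B_{n+1}(P(Y))` such that `H x` is supported on paths starting at `f x`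
(and ending at `y₀`), i.e. `H x ∈ B_{n+1}(P(f x, y₀))` for all `x`. -/
def DcatLE {X Y : Type*} [MetricSpace X] [MetricSpace Y] (f : X → Y) (y₀ : Y) (n : ℕ) : Prop :=
  ∃ H : C(X, FinSuppMeasures (n + 1) (EndPaths Y y₀)),
    ∀ x : X, (MeasureTheory.LevyProkhorov.toMeasureEquiv (H x).1)
      {φ : EndPaths Y y₀ | (φ : C(unitInterval, Y)) 0 = f x} = 1

/-- The distributional category of a pointed map `f : (X,x₀) → (Y,y₀)`. -/
noncomputable def dcat {X Y : Type*} [MetricSpace X] [MetricSpace Y] (f : X → Y) (y₀ : Y) :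
    ℕ∞ :=
  sInf {m : ℕ∞ | ∃ n : ℕ, m = n ∧ DcatLE f y₀ n}

/-- The distributional category of a pointed space, `dcat X := dcat (id_X)`. -/
noncomputable def dcatSpace (X : Type*) [MetricSpace X] (x₀ : X) : ℕ∞ :=
  dcat (id : X → X) x₀

/-- `cat X ≤ n`: `X` admits an open cover by `n+1` sets, each of whose inclusions
into `X` is null-homotopic. -/
def CatLE (X : Type*) [TopologicalSpace X] (n : ℕ) : Prop :=
  ∃ U : Fin (n + 1) → Set X, (∀ i, IsOpen (U i)) ∧ (⋃ i, U i) = Set.univ ∧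
    ∀ i, ContinuousMap.Nullhomotopic ⟨(Subtype.val : U i → X), continuous_subtype_val⟩

/-- The Lusternik–Schnirelmann category of a space. -/
noncomputable def cat (X : Type*) [TopologicalSpace X] : ℕ∞ :=
  sInf {m : ℕ∞ | ∃ n : ℕ, m = n ∧ CatLE X n}

/-- A space is aspherical if all its homotopy groups in degrees `≥ 2` vanish. -/
def Aspherical (X : Type*) [TopologicalSpace X] : Prop :=
  ∀ k : ℕ, 2 ≤ k → ∀ x : X, Subsingleton (HomotopyGroup (Fin k) X x)

/-- Euclidean `n`-space, the model space of topological `n`-manifolds. -/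
abbrev EucSp (n : ℕ) := EuclideanSpace ℝ (Fin n)

/-- `P(Y)_n`: the fiberwise application of `B_n` to the path fibration `p_Y : P(Y) → Y`,
i.e. the measures in `B_n(P(Y))` supported inside a single fiber `p_Y⁻¹(y)`. -/
abbrev FiberwiseMeasures (n : ℕ) (Y : Type*) [MetricSpace Y] (y₀ : Y) : Type _ :=
  {μ : FinSuppMeasures n (EndPaths Y y₀) //
    ∃ y : Y, (MeasureTheory.LevyProkhorov.toMeasureEquiv μ.1)
      {φ : EndPaths Y y₀ | (φ : C(unitInterval, Y)) 0 = y} = 1}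

/-- The fibration `B_n(p_Y) : P(Y)_n → Y`, sending a measure supported in the fiber
`p_Y⁻¹(y)` to the point `y`. -/
noncomputable def finSuppPathFibration (n : ℕ) (Y : Type*) [MetricSpace Y] (y₀ : Y) :
    FiberwiseMeasures n Y y₀ → Y :=
  fun μ => μ.2.choose

/-- The fiber of a measure is unique: a probability measure cannot give full mass to two
distinct fibers of the path fibration. -/
lemma fiber_unique {Y : Type u} [MetricSpace Y] (y₀ : Y)
    (ν : MeasureTheory.LevyProkhorov
      (@MeasureTheory.ProbabilityMeasure (EndPaths Y y₀) (borelMeasurable _)))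
    (y y' : Y)
    (h : (MeasureTheory.LevyProkhorov.toMeasureEquiv ν)
      {φ : EndPaths Y y₀ | (φ : C(unitInterval, Y)) 0 = y} = 1)
    (h' : (MeasureTheory.LevyProkhorov.toMeasureEquiv ν)
      {φ : EndPaths Y y₀ | (φ : C(unitInterval, Y)) 0 = y'} = 1) : y = y' := by
  letI inst : MeasurableSpace (EndPaths Y y₀) := borelMeasurable _
  haveI : BorelSpace (EndPaths Y y₀) := borelBorelSpace _
  set μ : @MeasureTheory.ProbabilityMeasure (EndPaths Y y₀) inst :=
    MeasureTheory.LevyProkhorov.toMeasureEquiv ν with hμ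
  by_contra hne
  have hcont : Continuous fun φ : EndPaths Y y₀ => (φ : C(unitInterval, Y)) 0 :=
    (ContinuousEvalConst.continuous_eval_const 0).comp continuous_subtype_val
  have hmeas : MeasurableSet {φ : EndPaths Y y₀ | (φ : C(unitInterval, Y)) 0 = y'} :=
    (isClosed_singleton.preimage hcont).measurableSet
  have hd : Disjoint {φ : EndPaths Y y₀ | (φ : C(unitInterval, Y)) 0 = y}
      {φ : EndPaths Y y₀ | (φ : C(unitInterval, Y)) 0 = y'} := by
    rw [Set.disjoint_left]
    intro φ h1 h2
    exact hne (h1.symm.trans h2)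
  have h1 : μ.toMeasure {φ : EndPaths Y y₀ | (φ : C(unitInterval, Y)) 0 = y} = 1 := by
    rw [← MeasureTheory.ProbabilityMeasure.ennreal_coeFn_eq_coeFn_toMeasure, h]
    simp
  have h2 : μ.toMeasure {φ : EndPaths Y y₀ | (φ : C(unitInterval, Y)) 0 = y'} = 1 := by
    rw [← MeasureTheory.ProbabilityMeasure.ennreal_coeFn_eq_coeFn_toMeasure, h']
    simp
  have hu := MeasureTheory.measure_union (μ := μ.toMeasure) hd hmeas
  rw [h1, h2] at hu
  have hle : μ.toMeasure ({φ : EndPaths Y y₀ | (φ : C(unitInterval, Y)) 0 = y} ∪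
      {φ : EndPaths Y y₀ | (φ : C(unitInterval, Y)) 0 = y'}) ≤ 1 :=
    MeasureTheory.prob_le_one
  rw [hu] at hle
  norm_num at hle

/-- The value of the fibration is determined by any fiber of full mass. -/
lemma fib_eq {Y : Type u} [MetricSpace Y] (y₀ : Y) (n : ℕ) (μ : FiberwiseMeasures n Y y₀)
    (y : Y)
    (h : (MeasureTheory.LevyProkhorov.toMeasureEquiv μ.1.1)
      {φ : EndPaths Y y₀ | (φ : C(unitInterval, Y)) 0 = y} = 1) :
    finSuppPathFibration n Y y₀ μ = y :=
  fiber_unique y₀ _ _ _ μ.2.choose_spec h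

theorem dcat_lt_iff_exists_lift {X Y : Type u} [MetricSpace X] [MetricSpace Y]
    [CompactSpace X] [PathConnectedSpace X] [CompactSpace Y] [PathConnectedSpace Y]
    (f : C(X, Y)) (x₀ : X) (y₀ : Y) (hf : f x₀ = y₀) (n : ℕ) (hn : 1 ≤ n) :
    dcat (f : X → Y) y₀ < (n : ℕ∞) ↔
      ∃ g : C(X, FiberwiseMeasures n Y y₀),
        (finSuppPathFibration n Y y₀) ∘ ⇑g = ⇑f := by
  constructor
  · intro hlt
    -- extract a witness m < n with `DcatLE f y₀ m`
    rw [dcat, sInf_lt_iff] at hlt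
    obtain ⟨b, ⟨m, rfl, ⟨H, hH⟩⟩, hb⟩ := hlt
    have hmn : m + 1 ≤ n := by exact_mod_cast Nat.cast_lt.mp hb
    -- enlarge the support bound from m+1 to n
    have hcard : ∀ x : X, ∃ s : Finset (EndPaths Y y₀), s.card ≤ n ∧
        (MeasureTheory.LevyProkhorov.toMeasureEquiv (H x).1) (↑s : Set (EndPaths Y y₀)) = 1 := by
      intro x
      obtain ⟨s, hs, h1⟩ := (H x).2
      exact ⟨s, hs.trans hmn, h1⟩
    refine ⟨⟨fun x => ⟨(⟨(H x).1, hcard x⟩ : FinSuppMeasures n (EndPaths Y y₀)), f x, hH x⟩,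
      Continuous.subtype_mk
        (Continuous.subtype_mk (continuous_subtype_val.comp H.continuous) _) _⟩, ?_⟩
    funext x
    exact fib_eq y₀ n _ (f x) (hH x)
  · rintro ⟨g, hg⟩
    obtain ⟨m, rfl⟩ : ∃ m, n = m + 1 := ⟨n - 1, by omega⟩
    have hDcat : DcatLE (f : X → Y) y₀ m := by
      refine ⟨⟨fun x => (g x).1, continuous_subtype_val.comp g.continuous⟩, fun x => ?_⟩
      have hspec := (g x).2.choose_spec
      have hx : (g x).2.choose = f x := congrFun hg x
      rwa [hx] at hspec
    refine lt_of_le_of_lt (sInf_le ⟨m, rfl, hDcat⟩) ?_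
    exact_mod_cast Nat.lt_succ_self m

end
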